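/- Let E be a real inner product space and let a : [0,∞) → ℝ be strictly increasing with a(0) = 0. Define A : E → E by A(w) = (a(‖w‖)/‖w‖)·w for w ≠ 0 and A(0) = 0. If u, v ∈ E satisfy ⟨A(u) − A(v), u − v⟩ = 0, then u = v. -/

import Mathlib

/-- Strict monotonicity of the vector field `w ↦ (a ‖w‖ / ‖w‖) • w` underlying the
operator `Q[u] = div((a(|∇u|)/|∇u|)∇u)`. -/
theorem stmt_1 {E : Type*} [NormedAddCommGroup E] [InnerProductSpace ℝ E]
    (a : ℝ → ℝ) (ha_mono : StrictMonoOn a (Set.Ici 0)) (ha0 : a 0 = 0)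
    (A : E → E) (hA0 : A 0 = 0)
    (hA : ∀ w : E, w ≠ 0 → A w = (a ‖w‖ / ‖w‖) • w)
    (u v : E) (h : (inner ℝ (A u - A v) (u - v) : ℝ) = 0) :
    u = v := by
  have hapos : ∀ w : E, w ≠ 0 → 0 < a ‖w‖ := by
    intro w hw
    have := ha_mono (Set.mem_Ici.2 le_rfl) (Set.mem_Ici.2 (norm_nonneg w))
      (norm_pos_iff.2 hw)
    linarith [this]
  by_cases hu : u = 0
  · subst hu
    by_cases hv : v = 0
    · exact hv.symm
    · exfalso
      have hvn : (0:ℝ) < ‖v‖ := norm_pos_iff.2 hv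
      rw [hA0, hA v hv] at h
      simp only [zero_sub, inner_neg_neg, real_inner_smul_left,
        real_inner_self_eq_norm_sq] at h
      have hpos : (0:ℝ) < a ‖v‖ / ‖v‖ * ‖v‖ ^ 2 := by
        have := hapos v hv
        positivity
      linarith
  · by_cases hv : v = 0
    · subst hv
      exfalso
      have hun : (0:ℝ) < ‖u‖ := norm_pos_iff.2 hu
      rw [hA0, hA u hu] at h
      simp only [sub_zero, real_inner_smul_left, real_inner_self_eq_norm_sq] at h
      have hpos : (0:ℝ) < a ‖u‖ / ‖u‖ * ‖u‖ ^ 2 := by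
        have := hapos u hu
        positivity
      linarith
    · -- both nonzero
      have hun : (0:ℝ) < ‖u‖ := norm_pos_iff.2 hu
      have hvn : (0:ℝ) < ‖v‖ := norm_pos_iff.2 hv
      have hau := hapos u hu
      have hav := hapos v hv
      set c : ℝ := a ‖u‖ / ‖u‖ with hc
      set d : ℝ := a ‖v‖ / ‖v‖ with hd
      have hcpos : 0 < c := div_pos hau hun
      have hdpos : 0 < d := div_pos hav hvn
      rw [hA u hu, hA v hv] at h
      have hexp : c * ‖u‖ ^ 2 + d * ‖v‖ ^ 2 - (c + d) * inner ℝ u v = 0 := by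
        rw [inner_sub_left, inner_sub_right, inner_sub_right] at h
        simp only [real_inner_smul_left, real_inner_self_eq_norm_sq] at h
        have : inner ℝ v u = (inner ℝ u v : ℝ) := real_inner_comm u v
        rw [this] at h
        ring_nf
        ring_nf at h
        simp only [hc, hd]
        ring_nf
        linarith
      have hCS : (inner ℝ u v : ℝ) ≤ ‖u‖ * ‖v‖ := real_inner_le_norm u v
      -- key: (a‖u‖ - a‖v‖)(‖u‖ - ‖v‖) ≤ 0, hence ‖u‖ = ‖v‖
      have hkey : (a ‖u‖ - a ‖v‖) * (‖u‖ - ‖v‖) ≤ 0 := by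
        have hcd : 0 < c + d := by linarith
        have h1 : c * ‖u‖ ^ 2 + d * ‖v‖ ^ 2 ≤ (c + d) * (‖u‖ * ‖v‖) := by
          nlinarith [mul_le_mul_of_nonneg_left hCS hcd.le]
        have hcu : c * ‖u‖ = a ‖u‖ := div_mul_cancel₀ _ hun.ne'
        have hdv : d * ‖v‖ = a ‖v‖ := div_mul_cancel₀ _ hvn.ne'
        nlinarith [h1]
      have hnorm : ‖u‖ = ‖v‖ := by
        rcases lt_trichotomy ‖u‖ ‖v‖ with hlt | heq | hgt
        · exfalso
          have := ha_mono (Set.mem_Ici.2 hun.le) (Set.mem_Ici.2 hvn.le) hlt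
          nlinarith
        · exact heq
        · exfalso
          have := ha_mono (Set.mem_Ici.2 hvn.le) (Set.mem_Ici.2 hun.le) hgt
          nlinarith
      -- now c = d and h gives c * ‖u - v‖² = 0
      have hcd : c = d := by rw [hc, hd, hnorm]
      have hfin : c * ‖u - v‖ ^ 2 = 0 := by
        have : (inner ℝ ((c • u) - (d • v)) (u - v) : ℝ) = c * inner ℝ (u - v) (u - v) := by
          rw [hcd, ← smul_sub, real_inner_smul_left]
        rw [this, real_inner_self_eq_norm_sq] at h
        exact h
      have : ‖u - v‖ ^ 2 = 0 := by
        rcases mul_eq_zero.1 hfin with h' | h'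
        · exact absurd h' hcpos.ne'
        · exact h'
      have : u - v = 0 := by
        have := pow_eq_zero_iff (n := 2) (by norm_num) |>.1 this
        exact norm_eq_zero.1 this
      exact sub_eq_zero.1 this
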